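/- Let q ≥ 2 and let p be a probability distribution on a finite set X with |X| = q. Then the L1 distance between p and the uniform distribution satisfies ‖p − unif‖₁ ≥ (1 − H(p))/(q·log e), where H(p) is the Shannon entropy of p in base q (so H(p) ∈ [0,1]) and log e = 1/ln q. -/

import Mathlib

/-- For a probability distribution `p` on a finite set of size `q ≥ 2`,
`‖p − unif‖₁ ≥ (1 − H(p))/(q·log e)`, where `H` is the entropy in base `q` and
`log e = 1/ln q`, i.e. `∑ i, |p i − 1/q| ≥ (1 − H(p)) · ln q / q`. -/
theorem stmt0 {X : Type*} [Fintype X] (q : ℕ) (hq : 2 ≤ q)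
    (hcard : Fintype.card X = q)
    (p : X → ℝ) (hp0 : ∀ i, 0 ≤ p i) (hp1 : ∑ i, p i = 1) :
    ∑ i, |p i - 1 / (q : ℝ)| ≥
      (1 - (-∑ i, p i * Real.logb q (p i))) * Real.log q / q := by
  have hq0 : (0:ℝ) < q := by
    have : 0 < q := lt_of_lt_of_le (by norm_num) hq
    exact_mod_cast this
  have hq1 : (1:ℝ) < q := by exact_mod_cast lt_of_lt_of_le one_lt_two hq
  have hlq : Real.log q ≠ 0 := ne_of_gt (Real.log_pos hq1)
  have hcard' : (Finset.univ : Finset X).card = q := by simpa using hcard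
  -- Step A: (1 - H) * log q = ∑ p log (q p)
  have hA : (1 - (-∑ i, p i * Real.logb q (p i))) * Real.log q
      = ∑ i, p i * Real.log (q * p i) := by
    have h1 : ∀ i ∈ Finset.univ, p i * Real.log ((q:ℝ) * p i)
        = p i * Real.log q + p i * Real.log (p i) := by
      intro i _
      rcases eq_or_lt_of_le (hp0 i) with h | h
      · simp [← h]
      · rw [Real.log_mul (ne_of_gt hq0) (ne_of_gt h)]; ring
    have h2 : ∀ i ∈ Finset.univ, p i * Real.logb q (p i) * Real.log q
        = p i * Real.log (p i) := by
      intro i _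
      rw [Real.logb]
      field_simp
    rw [Finset.sum_congr rfl h1, Finset.sum_add_distrib, ← Finset.sum_mul, hp1, one_mul,
      sub_neg_eq_add, add_mul, one_mul, Finset.sum_mul, Finset.sum_congr rfl h2]
  -- Step B1: pointwise log bound
  have hB1 : ∑ i, p i * Real.log ((q:ℝ) * p i) ≤ ∑ i, p i * ((q:ℝ) * p i - 1) := by
    apply Finset.sum_le_sum
    intro i _
    rcases eq_or_lt_of_le (hp0 i) with h | h
    · simp [← h]
    · have hx : 0 < (q:ℝ) * p i := by positivity
      have := Real.log_le_sub_one_of_pos hx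
      nlinarith
  -- Step B2: algebraic identity
  have hB2 : ∑ i, p i * ((q:ℝ) * p i - 1) = q * ∑ i, (p i - 1/q)^2 := by
    have key : ∑ i, (p i * ((q:ℝ) * p i - 1) - q * (p i - 1/q)^2) = 0 := by
      have h3 : ∀ i ∈ Finset.univ,
          p i * ((q:ℝ) * p i - 1) - q * (p i - 1/q)^2 = p i - 1/q := by
        intro i _
        field_simp
        ring
      rw [Finset.sum_congr rfl h3, Finset.sum_sub_distrib, hp1, Finset.sum_const, hcard']
      rw [nsmul_eq_mul, mul_one_div_cancel hq0.ne', sub_self]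
    have := Finset.sum_sub_distrib (s := (Finset.univ : Finset X))
      (f := fun i => p i * ((q:ℝ) * p i - 1)) (g := fun i => (q:ℝ) * (p i - 1/q)^2)
    rw [this] at key
    rw [← Finset.mul_sum] at key
    linarith
  -- Step C: ∑ (p - 1/q)^2 ≤ ∑ |p - 1/q|
  have hC : ∑ i, (p i - 1/(q:ℝ))^2 ≤ ∑ i, |p i - 1/(q:ℝ)| := by
    apply Finset.sum_le_sum
    intro i _
    have hple : p i ≤ 1 := by
      have := Finset.single_le_sum (f := p) (fun j _ => hp0 j) (Finset.mem_univ i)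
      linarith [hp1 ▸ this]
    have h1q : 0 < 1/(q:ℝ) := by positivity
    have h1q' : 1/(q:ℝ) ≤ 1 := by
      rw [div_le_one hq0]; linarith
    have habs : |p i - 1/(q:ℝ)| ≤ 1 := by
      rw [abs_le]; constructor <;> nlinarith [hp0 i]
    calc (p i - 1/(q:ℝ))^2 = |p i - 1/(q:ℝ)|^2 := by rw [sq_abs]
      _ ≤ |p i - 1/(q:ℝ)| := by nlinarith [abs_nonneg (p i - 1/(q:ℝ))]
  rw [ge_iff_le, hA, div_le_iff₀ hq0]
  nlinarith [hq0, hB1, hB2, hC]
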